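/- Aggregate bound for the restricted-adversary robust compressed gradient: Let M, B partition [m] with |B| = alpha*m, U, T partition [m] with |T| = beta*m, alpha <= beta < 1/2. Let Q be a delta-approximate compressor. Suppose ||F_i - G|| <= eps1 for all i in M, ||(1/|M|) sum_{i in M} F_i - G|| <= eps2, and every i in B intersect U satisfies ||F_i|| <= max_{j in M} ||F_j||, and T contains at least one element of M maximizing over trims (so B-in-U norms are bounded by good-machine norms). Then || (1/|U|) sum_{i in U} Q(F_i) - G || <= ((sqrt(1-delta) + 2 alpha)/(1-beta)) ||G|| + ((sqrt(1-delta) + alpha + beta)/(1-beta)) eps1 + ((1-alpha)/(1-beta)) eps2. -/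

import Mathlib

set_option maxHeartbeats 1000000

open Finset

theorem stmt_12 (d m : ℕ) (hm : 0 < m) (α β δ ε1 ε2 : ℝ)
    (hα : 0 ≤ α) (hαβ : α ≤ β) (hβ : β < 1 / 2) (hδ : δ ∈ Set.Ioc (0 : ℝ) 1)
    (hε1 : 0 ≤ ε1) (hε2 : 0 ≤ ε2)
    (M B U T : Finset (Fin m))
    (hMB : Disjoint M B) (hMBu : M ∪ B = Finset.univ)
    (hUT : Disjoint U T) (hUTu : U ∪ T = Finset.univ)
    (hBcard : (B.card : ℝ) = α * m) (hTcard : (T.card : ℝ) = β * m)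
    (hMne : M.Nonempty) (hUne : U.Nonempty)
    (Q : EuclideanSpace ℝ (Fin d) → EuclideanSpace ℝ (Fin d))
    (hQ : ∀ x, ‖Q x - x‖ ≤ Real.sqrt (1 - δ) * ‖x‖)
    (F : Fin m → EuclideanSpace ℝ (Fin d)) (G : EuclideanSpace ℝ (Fin d))
    (h1 : ∀ i ∈ M, ‖F i - G‖ ≤ ε1)
    (h2 : ‖(1 / (M.card : ℝ)) • ∑ i ∈ M, F i - G‖ ≤ ε2)
    (h3 : ∀ i ∈ B ∩ U, ‖F i‖ ≤ M.sup' hMne fun j => ‖F j‖) :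
    ‖(1 / (U.card : ℝ)) • ∑ i ∈ U, Q (F i) - G‖ ≤
      ((Real.sqrt (1 - δ) + 2 * α) / (1 - β)) * ‖G‖ +
        ((Real.sqrt (1 - δ) + α + β) / (1 - β)) * ε1 +
        ((1 - α) / (1 - β)) * ε2 := by
  set S := Real.sqrt (1 - δ) with hS
  have hS0 : 0 ≤ S := Real.sqrt_nonneg _
  have hβ0 : 0 ≤ β := le_trans hα hαβ
  have h1β : 0 < 1 - β := by linarith
  -- cardinalities
  have hcardMB : M.card + B.card = m := by
    rw [← Finset.card_union_of_disjoint hMB, hMBu, Finset.card_univ, Fintype.card_fin]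
  have hcardUT : U.card + T.card = m := by
    rw [← Finset.card_union_of_disjoint hUT, hUTu, Finset.card_univ, Fintype.card_fin]
  have hMcard : (M.card : ℝ) = (1 - α) * m := by
    have : (M.card : ℝ) + (B.card : ℝ) = m := by exact_mod_cast hcardMB
    linarith [hBcard]
  have hUcard : (U.card : ℝ) = (1 - β) * m := by
    have : (U.card : ℝ) + (T.card : ℝ) = m := by exact_mod_cast hcardUT
    linarith [hTcard]
  have hm0 : (0:ℝ) < m := by exact_mod_cast hm
  have hu0 : (0:ℝ) < (U.card : ℝ) := by rw [hUcard]; positivity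
  have hkm0 : (0:ℝ) < (M.card : ℝ) := by rw [hMcard]; nlinarith
  -- splits
  have hMsplit : M = (M ∩ U) ∪ (M ∩ T) := by
    rw [← Finset.inter_union_distrib_left, hUTu, Finset.inter_univ]
  have hMdisj : Disjoint (M ∩ U) (M ∩ T) :=
    (hUT.mono (Finset.inter_subset_right) (Finset.inter_subset_right))
  have hUsplit : U = (M ∩ U) ∪ (B ∩ U) := by
    rw [← Finset.union_inter_distrib_right, hMBu, Finset.univ_inter]
  have hUdisj : Disjoint (M ∩ U) (B ∩ U) :=
    (hMB.mono (Finset.inter_subset_left) (Finset.inter_subset_left))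
  have hsumM : ∑ i ∈ M, F i = ∑ i ∈ M ∩ U, F i + ∑ i ∈ M ∩ T, F i := by
    nth_rewrite 1 [hMsplit]; exact Finset.sum_union hMdisj
  have hsumU : ∑ i ∈ U, F i = ∑ i ∈ M ∩ U, F i + ∑ i ∈ B ∩ U, F i := by
    nth_rewrite 1 [hUsplit]; exact Finset.sum_union hUdisj
  have hcardM' : (M.card : ℝ) = ((M ∩ U).card : ℝ) + ((M ∩ T).card : ℝ) := by
    nth_rewrite 1 [hMsplit]
    exact_mod_cast Finset.card_union_of_disjoint hMdisj
  have hcardU' : (U.card : ℝ) = ((M ∩ U).card : ℝ) + ((B ∩ U).card : ℝ) := by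
    nth_rewrite 1 [hUsplit]
    exact_mod_cast Finset.card_union_of_disjoint hUdisj
  -- uniform bound on ‖F i‖ for i ∈ U
  set c := ‖G‖ + ε1 with hc
  have hFM : ∀ i ∈ M, ‖F i‖ ≤ c := by
    intro i hi
    calc ‖F i‖ = ‖F i - G + G‖ := by rw [sub_add_cancel]
    _ ≤ ‖F i - G‖ + ‖G‖ := norm_add_le _ _
    _ ≤ ε1 + ‖G‖ := by linarith [h1 i hi]
    _ = c := by rw [hc]; ring
  have hFU : ∀ i ∈ U, ‖F i‖ ≤ c := by
    intro i hi
    have : i ∈ M ∪ B := by rw [hMBu]; exact Finset.mem_univ i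
    rcases Finset.mem_union.mp this with hiM | hiB
    · exact hFM i hiM
    · have hiBU : i ∈ B ∩ U := Finset.mem_inter.mpr ⟨hiB, hi⟩
      refine le_trans (h3 i hiBU) ?_
      obtain ⟨j, hj, hje⟩ := Finset.exists_mem_eq_sup' hMne fun j => ‖F j‖
      rw [hje]; exact hFM j hj
  have hc0 : 0 ≤ c := by rw [hc]; positivity
  -- key decomposition
  have key : (1 / (U.card : ℝ)) • ∑ i ∈ U, Q (F i) - G =
      (1 / (U.card : ℝ)) • ∑ i ∈ U, (Q (F i) - F i)
      + ((M.card : ℝ) / (U.card : ℝ)) • ((1 / (M.card : ℝ)) • ∑ i ∈ M, F i - G)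
      + (1 / (U.card : ℝ)) • (((M ∩ T).card : ℝ) • G - ∑ i ∈ M ∩ T, F i)
      + (1 / (U.card : ℝ)) • (∑ i ∈ B ∩ U, F i - ((B ∩ U).card : ℝ) • G) := by
    rw [Finset.sum_sub_distrib, hsumU, hsumM, hcardM', hcardU']
    have hu' : ((M ∩ U).card : ℝ) + ((B ∩ U).card : ℝ) ≠ 0 := by
      rw [← hcardU']; exact ne_of_gt hu0
    have hk' : ((M ∩ U).card : ℝ) + ((M ∩ T).card : ℝ) ≠ 0 := by
      rw [← hcardM']; exact ne_of_gt hkm0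
    match_scalars <;> field_simp <;> ring
  -- bounds on the pieces
  have b1 : ‖(1 / (U.card : ℝ)) • ∑ i ∈ U, (Q (F i) - F i)‖ ≤ S * c := by
    rw [norm_smul]
    have hbnd : ‖∑ i ∈ U, (Q (F i) - F i)‖ ≤ (U.card : ℝ) * (S * c) := by
      calc ‖∑ i ∈ U, (Q (F i) - F i)‖ ≤ ∑ _i ∈ U, (S * c) := by
            refine norm_sum_le_of_le U fun i hi => ?_
            calc ‖Q (F i) - F i‖ ≤ S * ‖F i‖ := hQ (F i)
            _ ≤ S * c := by nlinarith [hFU i hi, norm_nonneg (F i)]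
      _ = (U.card : ℝ) * (S * c) := by rw [Finset.sum_const, nsmul_eq_mul]
    rw [Real.norm_of_nonneg (le_of_lt (one_div_pos.mpr hu0))]
    rw [div_mul_eq_mul_div, one_mul, div_le_iff₀ hu0]
    nlinarith [hbnd]
  have b2 : ‖((M.card : ℝ) / (U.card : ℝ)) • ((1 / (M.card : ℝ)) • ∑ i ∈ M, F i - G)‖
      ≤ ((M.card : ℝ) / (U.card : ℝ)) * ε2 := by
    rw [norm_smul, Real.norm_of_nonneg (le_of_lt (div_pos hkm0 hu0))]
    exact mul_le_mul_of_nonneg_left h2 (le_of_lt (div_pos hkm0 hu0))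
  have b3 : ‖(1 / (U.card : ℝ)) • (((M ∩ T).card : ℝ) • G - ∑ i ∈ M ∩ T, F i)‖
      ≤ (((M ∩ T).card : ℝ) / (U.card : ℝ)) * ε1 := by
    rw [norm_smul, Real.norm_of_nonneg (le_of_lt (one_div_pos.mpr hu0))]
    have hbnd : ‖((M ∩ T).card : ℝ) • G - ∑ i ∈ M ∩ T, F i‖ ≤ ((M ∩ T).card : ℝ) * ε1 := by
      have heq : ((M ∩ T).card : ℝ) • G - ∑ i ∈ M ∩ T, F i = ∑ i ∈ M ∩ T, (G - F i) := by
        rw [Finset.sum_sub_distrib, Finset.sum_const]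
        push_cast
        module
      rw [heq]
      calc ‖∑ i ∈ M ∩ T, (G - F i)‖ ≤ ∑ _i ∈ M ∩ T, ε1 := by
            refine norm_sum_le_of_le _ fun i hi => ?_
            rw [norm_sub_rev]
            exact h1 i (Finset.mem_inter.mp hi).1
      _ = ((M ∩ T).card : ℝ) * ε1 := by rw [Finset.sum_const, nsmul_eq_mul]
    calc (1 / (U.card : ℝ)) * ‖((M ∩ T).card : ℝ) • G - ∑ i ∈ M ∩ T, F i‖
        ≤ (1 / (U.card : ℝ)) * (((M ∩ T).card : ℝ) * ε1) :=
          mul_le_mul_of_nonneg_left hbnd (le_of_lt (one_div_pos.mpr hu0))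
    _ = (((M ∩ T).card : ℝ) / (U.card : ℝ)) * ε1 := by ring
  have b4 : ‖(1 / (U.card : ℝ)) • (∑ i ∈ B ∩ U, F i - ((B ∩ U).card : ℝ) • G)‖
      ≤ (((B ∩ U).card : ℝ) / (U.card : ℝ)) * (2 * ‖G‖ + ε1) := by
    rw [norm_smul, Real.norm_of_nonneg (le_of_lt (one_div_pos.mpr hu0))]
    have hbnd : ‖∑ i ∈ B ∩ U, F i - ((B ∩ U).card : ℝ) • G‖
        ≤ ((B ∩ U).card : ℝ) * (2 * ‖G‖ + ε1) := by
      have heq : ∑ i ∈ B ∩ U, F i - ((B ∩ U).card : ℝ) • G = ∑ i ∈ B ∩ U, (F i - G) := by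
        rw [Finset.sum_sub_distrib, Finset.sum_const]
        push_cast
        module
      rw [heq]
      calc ‖∑ i ∈ B ∩ U, (F i - G)‖ ≤ ∑ _i ∈ B ∩ U, (2 * ‖G‖ + ε1) := by
            refine norm_sum_le_of_le _ fun i hi => ?_
            have hb := hFU i (Finset.mem_inter.mp hi).2
            calc ‖F i - G‖ ≤ ‖F i‖ + ‖G‖ := norm_sub_le _ _
            _ ≤ 2 * ‖G‖ + ε1 := by rw [hc] at hb; linarith
      _ = ((B ∩ U).card : ℝ) * (2 * ‖G‖ + ε1) := by rw [Finset.sum_const, nsmul_eq_mul]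
    calc (1 / (U.card : ℝ)) * ‖∑ i ∈ B ∩ U, F i - ((B ∩ U).card : ℝ) • G‖
        ≤ (1 / (U.card : ℝ)) * (((B ∩ U).card : ℝ) * (2 * ‖G‖ + ε1)) :=
          mul_le_mul_of_nonneg_left hbnd (le_of_lt (one_div_pos.mpr hu0))
    _ = (((B ∩ U).card : ℝ) / (U.card : ℝ)) * (2 * ‖G‖ + ε1) := by ring
  have total : ‖(1 / (U.card : ℝ)) • ∑ i ∈ U, Q (F i) - G‖ ≤
      S * c + ((M.card : ℝ) / (U.card : ℝ)) * ε2
      + (((M ∩ T).card : ℝ) / (U.card : ℝ)) * ε1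
      + (((B ∩ U).card : ℝ) / (U.card : ℝ)) * (2 * ‖G‖ + ε1) := by
    rw [key]
    refine le_trans (norm_add_le _ _) (add_le_add (le_trans (norm_add_le _ _)
      (add_le_add (le_trans (norm_add_le _ _) (add_le_add b1 b2)) b3)) b4)
  -- ratio bounds
  have r2 : ((M.card : ℝ) / (U.card : ℝ)) = (1 - α) / (1 - β) := by
    rw [hMcard, hUcard, mul_div_mul_right _ _ (ne_of_gt hm0)]
  have r3 : (((M ∩ T).card : ℝ) / (U.card : ℝ)) ≤ β / (1 - β) := by
    have hMT : ((M ∩ T).card : ℝ) ≤ β * m := by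
      calc ((M ∩ T).card : ℝ) ≤ (T.card : ℝ) := by
            exact_mod_cast Finset.card_le_card (Finset.inter_subset_right)
      _ = β * m := hTcard
    rw [hUcard, div_le_div_iff₀ (by positivity) h1β]; nlinarith
  have r4 : (((B ∩ U).card : ℝ) / (U.card : ℝ)) ≤ α / (1 - β) := by
    have hBU : ((B ∩ U).card : ℝ) ≤ α * m := by
      calc ((B ∩ U).card : ℝ) ≤ (B.card : ℝ) := by
            exact_mod_cast Finset.card_le_card (Finset.inter_subset_left)
      _ = α * m := hBcard
    rw [hUcard, div_le_div_iff₀ (by positivity) h1β]; nlinarith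
  have hG0 : 0 ≤ ‖G‖ := norm_nonneg _
  rw [r2] at total
  refine le_trans total ?_
  have step1 : S * c + ((1 - α) / (1 - β)) * ε2
      + (((M ∩ T).card : ℝ) / (U.card : ℝ)) * ε1
      + (((B ∩ U).card : ℝ) / (U.card : ℝ)) * (2 * ‖G‖ + ε1)
      ≤ S * c + ((1 - α) / (1 - β)) * ε2 + (β / (1 - β)) * ε1
        + (α / (1 - β)) * (2 * ‖G‖ + ε1) := by
    have := mul_le_mul_of_nonneg_right r3 hε1
    have := mul_le_mul_of_nonneg_right r4 (by positivity : (0:ℝ) ≤ 2 * ‖G‖ + ε1)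
    linarith
  refine le_trans step1 ?_
  have hdiff : ((S + 2 * α) / (1 - β)) * ‖G‖ + ((S + α + β) / (1 - β)) * ε1
      + ((1 - α) / (1 - β)) * ε2
      - (S * c + ((1 - α) / (1 - β)) * ε2 + (β / (1 - β)) * ε1
        + (α / (1 - β)) * (2 * ‖G‖ + ε1))
      = (S * β / (1 - β)) * (‖G‖ + ε1) := by
    rw [hc]; field_simp; ring
  have hpos : 0 ≤ (S * β / (1 - β)) * (‖G‖ + ε1) := by positivity
  linarith [hdiff, hpos]
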